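/- arXiv:2311.11581 — 3 statements merged into one kernel-verified Lean document; each statement's English description precedes it below -/
import Mathlib

section
/- For distinct positive integers m_1, ..., m_r and coefficients b_i = ∏_{j≠i} m_i²/(m_i² - m_j²), the weighted power sums G_{2ℓ} := ∑_{i=1}^r b_i / m_i^{2ℓ} vanish for all ℓ = 1, ..., r-1. -/
open Finset

open Polynomial in
lemma leadingCoeff_lagrange_basis {F : Type*} [Field F] {ι : Type*} [DecidableEq ι]
    (s : Finset ι) (v : ι → F) {i : ι} :
    (Lagrange.basis s v i).leadingCoeff = ∏ j ∈ s.erase i, (v i - v j)⁻¹ := by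
  rw [Lagrange.basis, leadingCoeff_prod]
  refine prod_congr rfl fun j hj => ?_
  rw [Lagrange.basisDivisor, leadingCoeff_mul, leadingCoeff_C, leadingCoeff_X_sub_C, mul_one]

open Polynomial in
lemma lagrange_power_sum_zero {F : Type*} [Field F] {ι : Type*} [DecidableEq ι]
    (s : Finset ι) (v : ι → F) (hvs : Set.InjOn v s) {k : ℕ} (hk : k + 1 < s.card) :
    ∑ i ∈ s, (v i) ^ k * ∏ j ∈ s.erase i, (v i - v j)⁻¹ = 0 := by
  have hdeg : (X ^ k : F[X]).degree < s.card := by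
    rw [degree_X_pow]; exact_mod_cast Nat.lt_of_succ_lt hk
  have h := Lagrange.eq_interpolate hvs hdeg
  have h2 := congrArg (fun p => Polynomial.coeff p (s.card - 1)) h
  simp only [Lagrange.interpolate_apply, finset_sum_coeff, coeff_C_mul, eval_pow, eval_X,
    coeff_X_pow] at h2
  rw [if_neg (by omega)] at h2
  rw [h2]
  refine sum_congr rfl fun i hi => ?_
  congr 1
  rw [← leadingCoeff_lagrange_basis s v, Polynomial.leadingCoeff,
    Lagrange.natDegree_basis hvs hi]

/-- For distinct positive integers `m i` and `b i = ∏_{j ≠ i} (m i)²/((m i)² - (m j)²)`,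
the weighted power sums `G_{2ℓ} = ∑ i, b i / (m i)^(2ℓ)` vanish for `ℓ = 1, ..., r-1`. -/
theorem mpe_order_conditions (r : ℕ) (m : Fin r → ℕ)
    (hpos : ∀ i, 0 < m i) (hinj : Function.Injective m)
    (ℓ : ℕ) (hℓ1 : 1 ≤ ℓ) (hℓr : ℓ ≤ r - 1) :
    ∑ i : Fin r, (∏ j ∈ univ.erase i,
      ((m i : ℝ) ^ 2 / ((m i : ℝ) ^ 2 - (m j : ℝ) ^ 2))) / (m i : ℝ) ^ (2 * ℓ) = 0 := by
  have hr : 2 ≤ r := by omega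
  set v : Fin r → ℝ := fun i => (m i : ℝ) ^ 2 with hvdef
  have hinjv : Set.InjOn v (univ : Finset (Fin r)) := by
    intro i _ j _ h
    apply hinj
    apply Nat.pow_left_injective two_ne_zero
    exact_mod_cast (show ((m i)^2 : ℝ) = ((m j)^2 : ℝ) from h)
  have key := lagrange_power_sum_zero (univ : Finset (Fin r)) v hinjv
    (k := r - 1 - ℓ) (by rw [card_univ, Fintype.card_fin]; omega)
  rw [← key]
  refine sum_congr rfl fun i _ => ?_
  have h0 : v i ≠ 0 := by
    have := hpos i
    simp only [hvdef]
    positivity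
  have hc : ((univ : Finset (Fin r)).erase i).card = r - 1 := by
    rw [card_erase_of_mem (mem_univ i), card_univ, Fintype.card_fin]
  have hml : ((m i : ℝ)) ^ (2 * ℓ) = v i ^ ℓ := by rw [pow_mul]
  rw [hml]
  simp_rw [div_eq_mul_inv, prod_mul_distrib, prod_const, hc]
  rw [pow_sub₀ _ h0 (show ℓ ≤ r - 1 by omega)]
  ring
end

section
/- There are no real numbers b_1, b_2, a_1, a_2 with b_1 + b_2 = 1, b_1·w31(a_1) + b_2·w31(a_2) = 0, b_1·w41(a_1) + b_2·w41(a_2) = 0, b_1·w51(a_1) + b_2·w51(a_2) = 0, and b_1·w52(a_1) + b_2·w52(a_2) = 0, where w31(a) = (1-a)³+a³, w41(a) = (1/2)a(2a-1)(1-a), w51(a) = (1-a)⁵+a⁵, and w52(a) = (1/12)a(2a-1)²(a-1) + (1/24)w31(a). -/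
/-- There is no fifth-order method of the form
`b₁ S_{(1-a₁)h}∘S_{a₁h} + b₂ S_{(1-a₂)h}∘S_{a₂h}`: no reals satisfy
`b₁ + b₂ = 1` together with the vanishing of `G₃₁`, `G₄₁`, `G₅₁`, `G₅₂`. -/
theorem no_fifth_order_two_stage :
    ¬ ∃ b₁ b₂ a₁ a₂ : ℝ,
      b₁ + b₂ = 1 ∧
      b₁ * ((1 - a₁)^3 + a₁^3) + b₂ * ((1 - a₂)^3 + a₂^3) = 0 ∧
      b₁ * ((1/2) * a₁ * (2*a₁ - 1) * (1 - a₁))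
        + b₂ * ((1/2) * a₂ * (2*a₂ - 1) * (1 - a₂)) = 0 ∧
      b₁ * ((1 - a₁)^5 + a₁^5) + b₂ * ((1 - a₂)^5 + a₂^5) = 0 ∧
      b₁ * ((1/12) * a₁ * (2*a₁ - 1)^2 * (a₁ - 1) + (1/24) * ((1 - a₁)^3 + a₁^3))
        + b₂ * ((1/12) * a₂ * (2*a₂ - 1)^2 * (a₂ - 1) + (1/24) * ((1 - a₂)^3 + a₂^3))
        = 0 := by
  rintro ⟨b₁, b₂, a₁, a₂, h0, h3, h4, h5, h52⟩
  have h : (0:ℝ) = 1 := by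
    linear_combination -(5/2)*h3 + 4*h5 - 60*h52 + h0
  exact zero_ne_one h
end

section
/- Let a ∈ ℝ and define for the symmetric 3-stage composition S_{ah}∘S_{(1-2a)h}∘S_{ah} the polynomials w31(a) = 2a³ + (1-2a)³, w71(a) = 2a⁷ + (1-2a)⁷, and the corresponding polynomials w72, w73, w74 arising from the BCH expansion. Then any reals b_1,...,b_k and a_1,...,a_k satisfying the order-6 conditions G_00 = 1, G_31 = G_51 = G_52 = G̃_63 = 0 also satisfy G_72 = -5/4536 + (5/126)·G_71. -/
noncomputable section
open Finset

/-- Coefficient of `Y₃` for the palindromic 3-stage composition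
`S_{ah}∘S_{(1-2a)h}∘S_{ah}`. -/
def w31 (a : ℝ) : ℝ := 2 * a^3 + (1 - 2*a)^3

/-- Coefficient of `Y₅`. -/
def w51 (a : ℝ) : ℝ := 2 * a^5 + (1 - 2*a)^5

/-- Coefficient of `E₅₂ = [Y₁,[Y₁,Y₃]]` (from the BCH expansion). -/
def w52 (a : ℝ) : ℝ :=
  1/24 - (5/12) * a + (5/3) * a^2 - (37/12) * a^3 + (17/6) * a^4 - a^5

/-- Coefficient of `Y₇`. -/
def w71 (a : ℝ) : ℝ := 2 * a^7 + (1 - 2*a)^7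

/-- Coefficient of `E₇₂ = [Y₁,[Y₁,Y₅]]` (from the BCH expansion). -/
def w72 (a : ℝ) : ℝ :=
  1/24 - (7/12) * a + (7/2) * a^2 - (35/3) * a^3 + (70/3) * a^4
    - (111/4) * a^5 + (109/6) * a^6 - 5 * a^7

/-- Seventh-order barrier relation: any linear combination
`∑ bᵢ S_{aᵢh}∘S_{(1-2aᵢ)h}∘S_{aᵢh}` satisfying the order-6 conditions
`G₀₀ = 1`, `G₃₁ = G₅₁ = G₅₂ = G̃₆₃ = 0` also satisfies
`G₇₂ = -5/4536 + (5/126) G₇₁`. -/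
theorem seventh_order_barrier_relation (k : ℕ) (b a : Fin k → ℝ)
    (h00 : ∑ i, b i = 1)
    (h31 : ∑ i, b i * w31 (a i) = 0)
    (h51 : ∑ i, b i * w51 (a i) = 0)
    (h52 : ∑ i, b i * w52 (a i) = 0)
    (h63 : ∑ i, b i * (w31 (a i))^2 = 0) :
    ∑ i, b i * w72 (a i) = -5/4536 + (5/126) * ∑ i, b i * w71 (a i) := by
  have key : ∀ x : ℝ, w72 x = -5/4536 + (5/126) * w71 x + (1/162) * w31 x
      - (5/216) * w51 x + (2/9) * w52 x + (7/648) * (w31 x)^2 := by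
    intro x; unfold w31 w51 w52 w71 w72; ring
  have : ∑ i, b i * w72 (a i)
      = ∑ i, (b i * (-5/4536) + (5/126) * (b i * w71 (a i))
          + (1/162) * (b i * w31 (a i)) - (5/216) * (b i * w51 (a i))
          + (2/9) * (b i * w52 (a i)) + (7/648) * (b i * (w31 (a i))^2)) := by
    apply Finset.sum_congr rfl; intro i _; rw [key]; ring
  rw [this]
  simp only [Finset.sum_add_distrib, Finset.sum_sub_distrib, ← Finset.mul_sum,
    ← Finset.sum_mul, h00, h31, h51, h52, h63]
  ring

end
end
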